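/- The proximal operator of a single group centering penalty preserves the within-group sum: if β* minimizes (1/2)||β - η||_2^2 + λ w ||D_a β_A||_2, then 1^T β*_A = 1^T η_A and β*_j = η_j for all j ∉ A; consequently 1_p^T β* = 1_p^T η. -/
import Mathlib

open Matrix BigOperators

noncomputable def l2 {n : Type*} [Fintype n] (v : n → ℝ) : ℝ := Real.sqrt (∑ i, v i ^ 2)

noncomputable def Dmat (n : Type*) [Fintype n] [DecidableEq n] : Matrix n n ℝ :=
  1 - ((Fintype.card n : ℝ))⁻¹ • Matrix.of (fun _ _ => (1 : ℝ))

/-- Single-group prox objective: (1/2)‖β-η‖² + λw‖D_a β_A‖₂. -/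
noncomputable def proxObj {p : ℕ} (lam wgt : ℝ) (A : Finset (Fin p))
    (η β : Fin p → ℝ) : ℝ :=
  (1 / 2) * l2 (β - η) ^ 2 + lam * wgt * l2 ((Dmat {x // x ∈ A}).mulVec (fun i => β i.1))

lemma l2_sq {n : Type*} [Fintype n] (v : n → ℝ) : l2 v ^ 2 = ∑ i, v i ^ 2 :=
  Real.sq_sqrt (Finset.sum_nonneg fun i _ => sq_nonneg _)

lemma Dmat_mulVec {n : Type*} [Fintype n] [DecidableEq n] (v : n → ℝ) :
    (Dmat n).mulVec v = fun i => v i - (Fintype.card n : ℝ)⁻¹ * ∑ j, v j := by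
  funext i
  simp [Dmat, Matrix.mulVec, dotProduct, Matrix.sub_apply, Matrix.one_apply,
    sub_mul, ite_mul, Finset.sum_sub_distrib, Finset.mul_sum, Matrix.smul_apply]

/-- The proximal operator preserves the within-group sum and fixes coordinates outside A. -/
theorem stmt7 {p : ℕ} (lam wgt : ℝ) (hlam : 0 < lam) (hwgt : 0 ≤ wgt)
    (A : Finset (Fin p)) (η : Fin p → ℝ) (βs : Fin p → ℝ)
    (hmin : ∀ β : Fin p → ℝ, proxObj lam wgt A η βs ≤ proxObj lam wgt A η β) :
    (∑ i ∈ A, βs i = ∑ i ∈ A, η i) ∧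
    (∀ j, j ∉ A → βs j = η j) ∧
    (∑ j, βs j = ∑ j, η j) := by
  -- Part 2: coordinates outside A are fixed
  have h2 : ∀ j, j ∉ A → βs j = η j := by
    intro j hj
    set β' := Function.update βs j (η j) with hβ'
    have hpen : (fun i : {x // x ∈ A} => β' i.1) = (fun i : {x // x ∈ A} => βs i.1) := by
      funext i
      exact Function.update_of_ne (by rintro rfl; exact hj i.2) _ _
    have hle := hmin β'
    rw [proxObj, proxObj, hpen] at hle
    have hq : l2 (βs - η) ^ 2 ≤ l2 (β' - η) ^ 2 := by linarith
    rw [l2_sq, l2_sq] at hq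
    have hdiff : ∑ i, ((βs - η) i ^ 2 - (β' - η) i ^ 2) = (βs j - η j) ^ 2 := by
      rw [Finset.sum_eq_single j]
      · simp [hβ', Pi.sub_apply, Function.update_self]
      · intro i _ hij
        simp [hβ', Pi.sub_apply, Function.update_of_ne hij]
      · simp
    rw [Finset.sum_sub_distrib] at hdiff
    have hsq : (βs j - η j) ^ 2 ≤ 0 := by linarith
    have := sq_nonneg (βs j - η j)
    have : (βs j - η j) ^ 2 = 0 := le_antisymm hsq this
    have := pow_eq_zero_iff (n := 2) (by norm_num) |>.mp this
    linarith [sub_eq_zero.mp this]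
  -- Part 1: within-group sum preserved
  have h1 : ∑ i ∈ A, βs i = ∑ i ∈ A, η i := by
    rcases Finset.eq_empty_or_nonempty A with hA | hA
    · simp [hA]
    · have ha : (0 : ℝ) < A.card := by exact_mod_cast Finset.card_pos.mpr hA
      set S := ∑ i ∈ A, (βs i - η i) with hS
      set c := S / A.card with hc
      set β' := fun i => if i ∈ A then βs i - c else βs i with hβ'
      have hcard : (Fintype.card {x // x ∈ A} : ℝ) = (A.card : ℝ) := by
        rw [Fintype.card_coe]
      have hpen : (Dmat {x // x ∈ A}).mulVec (fun i => β' i.1)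
          = (Dmat {x // x ∈ A}).mulVec (fun i => βs i.1) := by
        rw [Dmat_mulVec, Dmat_mulVec]
        funext i
        have h1' : ∀ k : {x // x ∈ A}, β' k.1 = βs k.1 - c := by
          intro k; simp [hβ', k.2]
        have hsum : ∑ j : {x // x ∈ A}, β' j.1
            = (∑ j : {x // x ∈ A}, βs j.1) - A.card * c := by
          simp [h1', Finset.sum_sub_distrib]
        rw [h1' i, hsum, hcard]
        have : (A.card : ℝ)⁻¹ * ((∑ j : {x // x ∈ A}, βs ↑j) - ↑A.card * c)
            = (A.card : ℝ)⁻¹ * (∑ j : {x // x ∈ A}, βs ↑j) - c := by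
          field_simp
        rw [this]; ring
      have hle := hmin β'
      rw [proxObj, proxObj, hpen] at hle
      have hq : l2 (βs - η) ^ 2 ≤ l2 (β' - η) ^ 2 := by linarith
      rw [l2_sq, l2_sq] at hq
      have hdiff : ∑ i, ((βs - η) i ^ 2 - (β' - η) i ^ 2)
          = 2 * c * S - A.card * c ^ 2 := by
        rw [← Finset.sum_subset (Finset.subset_univ A) (by
          intro i _ hi
          simp [hβ', Pi.sub_apply, hi])]
        have : ∀ i ∈ A, (βs - η) i ^ 2 - (β' - η) i ^ 2
            = 2 * c * (βs i - η i) - c ^ 2 := by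
          intro i hi
          simp only [hβ', Pi.sub_apply, if_pos hi]
          ring
        rw [Finset.sum_congr rfl this, Finset.sum_sub_distrib, ← Finset.mul_sum, ← hS]
        simp
      rw [Finset.sum_sub_distrib] at hdiff
      have hkey : 2 * c * S - A.card * c ^ 2 ≤ 0 := by linarith
      have hval : 2 * c * S - A.card * c ^ 2 = S ^ 2 / A.card := by
        rw [hc]; field_simp; ring
      rw [hval] at hkey
      have hS0 : S = 0 := by
        have : S ^ 2 ≤ 0 := by
          rw [div_le_iff₀ ha] at hkey; linarith
        have h2' := sq_nonneg S
        have : S ^ 2 = 0 := le_antisymm this h2'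
        exact pow_eq_zero_iff (n := 2) (by norm_num) |>.mp this
      have : ∑ i ∈ A, βs i - ∑ i ∈ A, η i = 0 := by
        rw [← Finset.sum_sub_distrib]; exact hS0
      linarith
  refine ⟨h1, h2, ?_⟩
  rw [← Finset.sum_add_sum_compl A βs, ← Finset.sum_add_sum_compl A η, h1]
  congr 1
  exact Finset.sum_congr rfl fun j hj => h2 j (Finset.mem_compl.mp hj)
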